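/- arXiv:2201.06532 — 2 statements merged into one kernel-verified Lean document; each statement's English description precedes it below -/
import Mathlib

section
/- Let x_1, ..., x_{n+1} be positive real numbers. Then (1/2) * Σ_{j=1}^n √(x_j) - √(x_{n+1})/4 ≤ Σ_{j=1}^n x_j / √(x_j + x_{j+1}). -/
lemma key (a b : ℝ) (ha : 0 ≤ a) (hb : 0 ≤ b) (hab : 0 < a^2 + b^2) :
    (3*a - b)/4 ≤ a^2 / Real.sqrt (a^2+b^2) := by
  set s := Real.sqrt (a^2+b^2) with hs
  have hspos : 0 < s := Real.sqrt_pos.mpr hab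
  have hs2 : s^2 = a^2 + b^2 := Real.sq_sqrt hab.le
  rw [div_le_div_iff₀ (by norm_num) hspos]
  rcases le_or_gt (3*a) b with h | h
  · nlinarith [sq_nonneg a, mul_nonneg (sub_nonneg.mpr h) hspos.le]
  · have hkey : (3*a - b)^2 * s^2 ≤ (4*a^2)^2 := by
      rw [hs2]
      nlinarith [sq_nonneg (a-b), sq_nonneg (a*b-b^2), mul_pos (sub_pos.mpr h) (sub_pos.mpr h), sq_nonneg (a^2 - a*b), mul_nonneg (mul_nonneg ha hb) hb, mul_nonneg (mul_nonneg ha ha) hb]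
    nlinarith [mul_nonneg (sub_pos.mpr h).le hspos.le, sq_nonneg a]


lemma tel (f : ℕ → ℝ) : ∀ n : ℕ, ∑ j ∈ Finset.Icc 1 n, (f j - f (j+1)) = f 1 - f (n+1) - (f 1 - f 1)
  | 0 => by simp
  | (m+1) => by
    rw [Finset.sum_Icc_succ_top (by omega), tel f m]
    ring

theorem stmt_0 (n : ℕ) (hn : 0 < n) (x : ℕ → ℝ)
    (hx : ∀ j ∈ Finset.Icc 1 (n + 1), 0 < x j) :
    (1 / 2) * ∑ j ∈ Finset.Icc 1 n, Real.sqrt (x j) - Real.sqrt (x (n + 1)) / 4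
      ≤ ∑ j ∈ Finset.Icc 1 n, x j / Real.sqrt (x j + x (j + 1)) := by
  have hterm : ∀ j ∈ Finset.Icc 1 n,
      (3 * Real.sqrt (x j) - Real.sqrt (x (j+1))) / 4 ≤ x j / Real.sqrt (x j + x (j + 1)) := by
    intro j hj
    simp only [Finset.mem_Icc] at hj
    have hxj : 0 < x j := hx j (Finset.mem_Icc.mpr ⟨hj.1, hj.2.trans (Nat.le_succ n)⟩)
    have hxj1 : 0 < x (j+1) := hx (j+1) (Finset.mem_Icc.mpr ⟨le_trans hj.1 (Nat.le_succ j), by omega⟩)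
    have h := key (Real.sqrt (x j)) (Real.sqrt (x (j+1))) (Real.sqrt_nonneg _) (Real.sqrt_nonneg _)
      (by rw [Real.sq_sqrt hxj.le, Real.sq_sqrt hxj1.le]; positivity)
    rwa [Real.sq_sqrt hxj.le, Real.sq_sqrt hxj1.le] at h
  have hsum := Finset.sum_le_sum hterm
  refine le_trans ?_ hsum
  have htel : ∑ j ∈ Finset.Icc 1 n, (Real.sqrt (x j) - Real.sqrt (x (j+1)))
      = Real.sqrt (x 1) - Real.sqrt (x (n+1)) := by
    rw [tel (fun j => Real.sqrt (x j)) n]; ring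
  have hsplit : ∑ j ∈ Finset.Icc 1 n, (3 * Real.sqrt (x j) - Real.sqrt (x (j+1))) / 4
      = (1/2) * ∑ j ∈ Finset.Icc 1 n, Real.sqrt (x j)
        + (1/4) * ∑ j ∈ Finset.Icc 1 n, (Real.sqrt (x j) - Real.sqrt (x (j+1))) := by
    rw [Finset.mul_sum, Finset.mul_sum, ← Finset.sum_add_distrib]
    apply Finset.sum_congr rfl
    intro j _
    ring
  rw [hsplit, htel]
  have h1 : 0 ≤ Real.sqrt (x 1) := Real.sqrt_nonneg _
  linarith
end

section
/- Let x_1, ..., x_{n+1} be positive real numbers such that x_{n+1} ≤ Σ_{j=1}^n x_j. Then (1/4) * Σ_{j=1}^n √(x_j) ≤ Σ_{j=1}^n x_j / √(x_j + x_{j+1}). -/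
private lemma shift_sum (a : ℕ → ℝ) (m : ℕ) :
    ∑ j ∈ Finset.Icc 1 m, a (j + 1)
      = (∑ j ∈ Finset.Icc 1 m, a j) - a 1 + a (m + 1) := by
  induction m with
  | zero => simp
  | succ k ih =>
    rw [Finset.sum_Icc_succ_top (Nat.le_add_left 1 k),
      Finset.sum_Icc_succ_top (Nat.le_add_left 1 k), ih]
    ring

theorem stmt_1 (n : ℕ) (hn : 0 < n) (x : ℕ → ℝ)
    (hx : ∀ j ∈ Finset.Icc 1 (n + 1), 0 < x j)
    (hlast : x (n + 1) ≤ ∑ j ∈ Finset.Icc 1 n, x j) :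
    (1 / 4) * ∑ j ∈ Finset.Icc 1 n, Real.sqrt (x j)
      ≤ ∑ j ∈ Finset.Icc 1 n, x j / Real.sqrt (x j + x (j + 1)) := by
  set a : ℕ → ℝ := fun j => Real.sqrt (x j) with ha
  have hpos : ∀ j ∈ Finset.Icc 1 n, 0 < x j ∧ 0 < x (j + 1) := by
    intro j hj
    rw [Finset.mem_Icc] at hj
    exact ⟨hx j (Finset.mem_Icc.2 ⟨hj.1, hj.2.trans (Nat.le_succ n)⟩),
      hx (j + 1) (Finset.mem_Icc.2 ⟨Nat.le_add_left 1 j, Nat.succ_le_succ hj.2⟩)⟩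
  have key : ∀ j ∈ Finset.Icc 1 n,
      (3 * a j - a (j + 1)) / 4 ≤ x j / Real.sqrt (x j + x (j + 1)) := by
    intro j hj
    obtain ⟨hxj, hxj1⟩ := hpos j hj
    have hu : 0 < a j := Real.sqrt_pos.2 hxj
    have hv : 0 < a (j + 1) := Real.sqrt_pos.2 hxj1
    have hsq : x j = a j ^ 2 := (Real.sq_sqrt hxj.le).symm
    have hsq1 : x (j + 1) = a (j + 1) ^ 2 := (Real.sq_sqrt hxj1.le).symm
    have hd : Real.sqrt (x j + x (j + 1)) ≤ a j + a (j + 1) := by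
      rw [show a j + a (j + 1) = Real.sqrt ((a j + a (j + 1)) ^ 2) from
        (Real.sqrt_sq (by positivity)).symm]
      apply Real.sqrt_le_sqrt
      nlinarith
    have hd0 : 0 < Real.sqrt (x j + x (j + 1)) := Real.sqrt_pos.2 (by linarith)
    have h1 : x j / (a j + a (j + 1)) ≤ x j / Real.sqrt (x j + x (j + 1)) :=
      div_le_div_of_nonneg_left hxj.le hd0 hd
    refine le_trans ?_ h1
    rw [div_le_div_iff₀ (by norm_num) (by positivity)]
    nlinarith [sq_nonneg (a j - a (j + 1))]
  have hsum := Finset.sum_le_sum key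
  have hshift := shift_sum a n
  have hsum2 : ∑ j ∈ Finset.Icc 1 n, (3 * a j - a (j + 1)) / 4
      = (3 * ∑ j ∈ Finset.Icc 1 n, a j - ((∑ j ∈ Finset.Icc 1 n, a j) - a 1 + a (n + 1))) / 4 := by
    rw [← hshift, ← Finset.sum_div, Finset.sum_sub_distrib, Finset.mul_sum]
  -- a (n+1) ≤ ∑ a j
  have hA : a (n + 1) ≤ ∑ j ∈ Finset.Icc 1 n, a j := by
    have h2 : ∑ j ∈ Finset.Icc 1 n, x j ≤ (∑ j ∈ Finset.Icc 1 n, a j) ^ 2 := by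
      calc ∑ j ∈ Finset.Icc 1 n, x j = ∑ j ∈ Finset.Icc 1 n, (a j) ^ 2 := by
            apply Finset.sum_congr rfl
            intro j hj
            exact (Real.sq_sqrt (hpos j hj).1.le).symm
        _ ≤ (∑ j ∈ Finset.Icc 1 n, a j) ^ 2 :=
            Finset.sum_sq_le_sq_sum_of_nonneg (fun j _ => Real.sqrt_nonneg _)
    calc a (n + 1) ≤ Real.sqrt ((∑ j ∈ Finset.Icc 1 n, a j) ^ 2) :=
          Real.sqrt_le_sqrt (hlast.trans h2)
      _ = ∑ j ∈ Finset.Icc 1 n, a j :=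
          Real.sqrt_sq (Finset.sum_nonneg fun j _ => Real.sqrt_nonneg _)
  have ha1 : 0 ≤ a 1 := Real.sqrt_nonneg _
  calc (1 / 4) * ∑ j ∈ Finset.Icc 1 n, a j
      ≤ (3 * ∑ j ∈ Finset.Icc 1 n, a j - ((∑ j ∈ Finset.Icc 1 n, a j) - a 1 + a (n + 1))) / 4 := by
        linarith
    _ = ∑ j ∈ Finset.Icc 1 n, (3 * a j - a (j + 1)) / 4 := hsum2.symm
    _ ≤ _ := hsum
end
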